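/- Let b ∈ ℂ^m and c ∈ ℂ^p be vectors such that D(μ)⁻¹ B(μ) b lies in the column space of V and (c* C(μ) D(μ)⁻¹)* = (C(μ) D(μ)⁻¹)* c lies in the column space of W. Then the derivatives of H and H̃ at μ satisfy c* H′(μ) b = c* H̃′(μ) b. -/

import Mathlib

open Matrix

attribute [local instance] Matrix.normedAddCommGroup Matrix.normedSpace

private lemma entry_hasDerivAt {a b : ℕ} {f : ℂ → Matrix (Fin a) (Fin b) ℂ}
    {f' : Matrix (Fin a) (Fin b) ℂ} {μ : ℂ} (hf : HasDerivAt f f' μ) (i : Fin a) (j : Fin b) :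
    HasDerivAt (fun s => f s i j) (f' i j) μ :=
  hasDerivAt_pi.1 (hasDerivAt_pi.1 hf i) j

private lemma matmul_hasDerivAt {a b c : ℕ} {f : ℂ → Matrix (Fin a) (Fin b) ℂ}
    {g : ℂ → Matrix (Fin b) (Fin c) ℂ} {f' : Matrix (Fin a) (Fin b) ℂ}
    {g' : Matrix (Fin b) (Fin c) ℂ} {μ : ℂ}
    (hf : HasDerivAt f f' μ) (hg : HasDerivAt g g' μ) :
    HasDerivAt (fun s => f s * g s) (f' * g μ + f μ * g') μ := by
  refine hasDerivAt_pi.2 fun i => ?_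
  refine hasDerivAt_pi.2 fun l => ?_
  have key : HasDerivAt (fun s => ∑ j, f s i j * g s j l)
      (∑ j, (f' i j * g μ j l + f μ i j * g' j l)) μ :=
    HasDerivAt.fun_sum fun j _ => (entry_hasDerivAt hf i j).fun_mul (entry_hasDerivAt hg j l)
  have h2 : (f' * g μ + f μ * g') i l = ∑ j, (f' i j * g μ j l + f μ i j * g' j l) := by
    simp [Matrix.add_apply, Matrix.mul_apply, Finset.sum_add_distrib]
  rw [h2]
  exact key.congr_of_eventuallyEq (Filter.Eventually.of_forall fun s => Matrix.mul_apply)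

private lemma inv_hasDerivAt {a : ℕ} {D : ℂ → Matrix (Fin a) (Fin a) ℂ}
    {D' : Matrix (Fin a) (Fin a) ℂ} {μ : ℂ}
    (hD : HasDerivAt D D' μ) (hu : IsUnit (D μ)) :
    HasDerivAt (fun s => (D s)⁻¹) (-((D μ)⁻¹ * D' * (D μ)⁻¹)) μ := by
  have hudet : IsUnit (D μ).det := (Matrix.isUnit_iff_isUnit_det _).1 hu
  have hdet : (D μ).det ≠ 0 := IsUnit.ne_zero hudet
  have hcontD : ContinuousAt D μ := hD.continuousAt
  have hdetc : ContinuousAt (fun s => (D s).det) μ :=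
    (Continuous.matrix_det continuous_id).continuousAt.comp hcontD
  have hinvc : ContinuousAt (fun s => (D s)⁻¹) μ := by
    refine (continuousAt_matrix_inv (D μ) ?_).comp hcontD
    rw [Ring.inverse_eq_inv']
    exact continuousAt_inv₀ hdet
  have hev : ∀ᶠ s in nhds μ, IsUnit (D s).det :=
    (hdetc.eventually_ne hdet).mono fun s hs => isUnit_iff_ne_zero.2 hs
  have hD : Filter.Tendsto (slope D μ) (nhdsWithin μ {μ}ᶜ) (nhds D') :=
    (hasDerivAt_iff_tendsto_slope (f := D) (f' := D') (x := μ)).1 hD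
  refine (hasDerivAt_iff_tendsto_slope (f := fun s => (D s)⁻¹) (x := μ)).2 ?_
  have hinvt : Filter.Tendsto (fun s => (D s)⁻¹) (nhdsWithin μ {μ}ᶜ) (nhds (D μ)⁻¹) :=
    hinvc.tendsto.mono_left nhdsWithin_le_nhds
  have hmul : Filter.Tendsto (fun s => -((D μ)⁻¹ * slope D μ s * (D s)⁻¹))
      (nhdsWithin μ {μ}ᶜ) (nhds (-((D μ)⁻¹ * D' * (D μ)⁻¹))) :=
    ((tendsto_const_nhds.mul hD).mul hinvt).neg
  refine hmul.congr' ?_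
  filter_upwards [hev.filter_mono nhdsWithin_le_nhds] with s hs
  have h1 : D s * (D s)⁻¹ = 1 := Matrix.mul_nonsing_inv _ hs
  have h2 : (D μ)⁻¹ * D μ = 1 := Matrix.nonsing_inv_mul _ hudet
  have key : (D μ)⁻¹ * (D s - D μ) * (D s)⁻¹ = (D μ)⁻¹ - (D s)⁻¹ := by
    rw [Matrix.mul_sub, h2, Matrix.sub_mul, one_mul, Matrix.mul_assoc, h1, mul_one]
  rw [slope_def_module, slope_def_module, mul_smul_comm, smul_mul_assoc, ← smul_neg, key,
    neg_sub]

/-- Theorem 2.1 (iii): if `D(μ)⁻¹ B(μ) b ∈ Col(V)` and `(C(μ) D(μ)⁻¹)ᴴ c ∈ Col(W)`,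
then `cᴴ H′(μ) b = cᴴ H̃′(μ) b`. -/
theorem subspace_hermite_interpolation
    {n m p k : ℕ} (μ : ℂ)
    (B : ℂ → Matrix (Fin n) (Fin m) ℂ) (C : ℂ → Matrix (Fin p) (Fin n) ℂ)
    (D : ℂ → Matrix (Fin n) (Fin n) ℂ)
    (hB : DifferentiableAt ℂ B μ) (hC : DifferentiableAt ℂ C μ)
    (hD : DifferentiableAt ℂ D μ)
    (hDμ : IsUnit (D μ))
    (V W : Matrix (Fin n) (Fin k) ℂ)
    (hWDV : IsUnit (Wᴴ * D μ * V))
    (b : Fin m → ℂ) (c : Fin p → ℂ)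
    (hb : ((D μ)⁻¹ * B μ).mulVec b ∈ LinearMap.range V.mulVecLin)
    (hc : (C μ * (D μ)⁻¹)ᴴ.mulVec c ∈ LinearMap.range W.mulVecLin) :
    star c ⬝ᵥ (deriv (fun s => C s * (D s)⁻¹ * B s) μ).mulVec b =
      star c ⬝ᵥ (deriv (fun s => (C s * V) * (Wᴴ * D s * V)⁻¹ * (Wᴴ * B s)) μ).mulVec b := by
  -- notation
  set B0 := B μ with hB0
  set C0 := C μ with hC0
  set E := D μ with hE
  set B' := deriv B μ with hB'
  set C' := deriv C μ with hC'
  set D' := deriv D μ with hD'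
  set K := Wᴴ * E * V with hK
  have hEdet : IsUnit E.det := (Matrix.isUnit_iff_isUnit_det _).1 hDμ
  have hKdet : IsUnit K.det := (Matrix.isUnit_iff_isUnit_det _).1 hWDV
  -- derivatives
  have hDinv : HasDerivAt (fun s => (D s)⁻¹) (-(E⁻¹ * D' * E⁻¹)) μ :=
    inv_hasDerivAt hD.hasDerivAt hDμ
  have hH : HasDerivAt (fun s => C s * (D s)⁻¹ * B s)
      ((C' * E⁻¹ + C0 * -(E⁻¹ * D' * E⁻¹)) * B0 + C0 * E⁻¹ * B') μ :=
    matmul_hasDerivAt (matmul_hasDerivAt hC.hasDerivAt hDinv) hB.hasDerivAt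
  have hKd : HasDerivAt (fun s => Wᴴ * D s * V) (Wᴴ * D' * V) μ := by
    have := matmul_hasDerivAt
      (matmul_hasDerivAt (hasDerivAt_const μ Wᴴ) hD.hasDerivAt) (hasDerivAt_const μ V)
    simp at this
    exact this
  have hKinv : HasDerivAt (fun s => (Wᴴ * D s * V)⁻¹) (-(K⁻¹ * (Wᴴ * D' * V) * K⁻¹)) μ :=
    inv_hasDerivAt hKd hWDV
  have hCV : HasDerivAt (fun s => C s * V) (C' * V) μ := by
    have := matmul_hasDerivAt hC.hasDerivAt (hasDerivAt_const μ V)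
    simp at this
    exact this
  have hWB : HasDerivAt (fun s => Wᴴ * B s) (Wᴴ * B') μ := by
    have := matmul_hasDerivAt (hasDerivAt_const μ Wᴴ) hB.hasDerivAt
    simp at this
    exact this
  have hH2 : HasDerivAt (fun s => (C s * V) * (Wᴴ * D s * V)⁻¹ * (Wᴴ * B s))
      ((C' * V * K⁻¹ + C0 * V * -(K⁻¹ * (Wᴴ * D' * V) * K⁻¹)) * (Wᴴ * B0)
        + C0 * V * K⁻¹ * (Wᴴ * B')) μ :=
    matmul_hasDerivAt (matmul_hasDerivAt hCV hKinv) hWB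
  erw [hH.deriv, hH2.deriv]
  -- unpack the subspace hypotheses
  obtain ⟨x, hx⟩ := hb
  obtain ⟨y, hy⟩ := hc
  rw [Matrix.mulVecLin_apply] at hx hy
  have hxu : V.mulVec x = E⁻¹.mulVec (B0.mulVec b) := by
    rw [hx, ← Matrix.mulVec_mulVec]
  -- row vector facts
  have h1 : star c ᵥ* (C0 * E⁻¹) = star y ᵥ* Wᴴ := by
    have := congrArg star hy
    rw [Matrix.star_mulVec, Matrix.star_mulVec, Matrix.conjTranspose_conjTranspose] at this
    exact this.symm
  have h2 : star c ᵥ* (C0 * V * K⁻¹) = star y := by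
    have hsplit : C0 * V * K⁻¹ = (C0 * E⁻¹) * (E * (V * K⁻¹)) := by
      rw [← Matrix.mul_assoc, Matrix.nonsing_inv_mul_cancel_right _ _ hEdet, Matrix.mul_assoc]
    have hone : Wᴴ * (E * (V * K⁻¹)) = 1 := by
      rw [← Matrix.mul_assoc, ← Matrix.mul_assoc, ← hK, Matrix.mul_nonsing_inv _ hKdet]
    rw [hsplit, ← Matrix.vecMul_vecMul, h1, Matrix.vecMul_vecMul, hone, Matrix.vecMul_one]
  -- the two key scalar identities
  have G1 : ∀ v : Fin n → ℂ,
      star c ⬝ᵥ C0.mulVec (E⁻¹.mulVec v) = star y ⬝ᵥ Wᴴ.mulVec v := by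
    intro v
    rw [Matrix.mulVec_mulVec, Matrix.dotProduct_mulVec, h1, ← Matrix.dotProduct_mulVec]
  have G2 : ∀ v : Fin k → ℂ,
      star c ⬝ᵥ C0.mulVec (V.mulVec (K⁻¹.mulVec v)) = star y ⬝ᵥ v := by
    intro v
    rw [Matrix.mulVec_mulVec, Matrix.mulVec_mulVec, Matrix.dotProduct_mulVec, h2]
  -- collapse `K⁻¹ Wᴴ B0 b` to `x`
  have A2 : K⁻¹.mulVec (Wᴴ.mulVec (B0.mulVec b)) = x := by
    have hB0b : B0.mulVec b = E.mulVec (V.mulVec x) := by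
      rw [hxu, Matrix.mulVec_mulVec, Matrix.mul_nonsing_inv _ hEdet, Matrix.one_mulVec]
    rw [hB0b, Matrix.mulVec_mulVec, Matrix.mulVec_mulVec, Matrix.mulVec_mulVec,
      Matrix.mul_assoc (K⁻¹ * Wᴴ) E V, Matrix.mul_assoc K⁻¹ Wᴴ (E * V),
      ← Matrix.mul_assoc Wᴴ E V, ← hK, Matrix.nonsing_inv_mul _ hKdet, Matrix.one_mulVec]
  -- expand everything into nested `mulVec`s
  simp only [Matrix.add_mul, Matrix.mul_neg, Matrix.neg_mul, Matrix.add_mulVec,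
    Matrix.neg_mulVec, dotProduct_add, dotProduct_neg, ← Matrix.mulVec_mulVec]
  rw [A2, G2, G2, ← G1, ← G1, hxu]
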